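/- If a family of subspaces {W_i}_{i=1}^M of an N-dimensional real inner product space does norm retrieval, then ∑_{i=1}^M dim W_i ≥ N. -/

import Mathlib

open scoped RealInnerProductSpace

noncomputable section

lemma finrank_finsetSup_le {H : Type*} [NormedAddCommGroup H] [InnerProductSpace ℝ H]
    [FiniteDimensional ℝ H] {ι : Type*} (W : ι → Submodule ℝ H) (s : Finset ι) :
    Module.finrank ℝ ↥(s.sup W) ≤ ∑ i ∈ s, Module.finrank ℝ (W i) := by
  classical
  induction s using Finset.cons_induction with
  | empty => simp
  | cons a s ha ih =>
    rw [Finset.sup_cons, Finset.sum_cons]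
    exact (Submodule.finrank_add_le_finrank_add_finrank _ _).trans (by omega)

/-- A family of subspaces of a finite-dimensional real inner product space does
norm retrieval (via their orthogonal projections) if equality of the norms of all the
orthogonal projections of two vectors implies equality of the norms of the vectors. -/
def DoesNormRetrieval {H : Type*} [NormedAddCommGroup H] [InnerProductSpace ℝ H]
    [FiniteDimensional ℝ H] {ι : Type*} (W : ι → Submodule ℝ H) : Prop :=
  ∀ x y : H, (∀ i : ι, ‖(W i).orthogonalProjectionOnto x‖ = ‖(W i).orthogonalProjectionOnto y‖) →
    ‖x‖ = ‖y‖

/-- If `{W_i}_{i=1}^M` does norm retrieval in an `N`-dimensional real inner product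
space, then the dimensions of the subspaces sum to at least `N`. -/
theorem stmt_8 {H : Type*} [NormedAddCommGroup H] [InnerProductSpace ℝ H]
    [FiniteDimensional ℝ H] {N M : ℕ} (hdim : Module.finrank ℝ H = N)
    (W : Fin M → Submodule ℝ H) (hW : DoesNormRetrieval W) :
    N ≤ ∑ i : Fin M, Module.finrank ℝ (W i) := by
  have htop : (⨆ i, W i) = ⊤ := by
    by_contra h
    have horth : (⨆ i, W i)ᗮ ≠ ⊥ := by
      intro hb
      apply h
      have := Submodule.orthogonal_orthogonal (⨆ i, W i)
      rw [hb, Submodule.bot_orthogonal_eq_top] at this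
      exact this.symm ▸ rfl
    obtain ⟨x, hx, hx0⟩ := Submodule.exists_mem_ne_zero_of_ne_bot horth
    have hxn : ‖x‖ = ‖(0 : H)‖ := by
      apply hW
      intro i
      have hxi : x ∈ (W i)ᗮ :=
        Submodule.orthogonal_le (le_iSup W i) hx
      rw [map_zero, (Submodule.orthogonalProjectionOnto_eq_zero_iff).mpr hxi]
    simp at hxn
    exact hx0 hxn
  calc N = Module.finrank ℝ (⊤ : Submodule ℝ H) := by rw [finrank_top, hdim]
    _ = Module.finrank ℝ ↥(Finset.univ.sup W) := by
        rw [← htop, ← Finset.sup_univ_eq_iSup]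
    _ ≤ ∑ i : Fin M, Module.finrank ℝ (W i) := finrank_finsetSup_le W _
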